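/- arXiv:2004.00738 — 2 statements merged into one kernel-verified Lean document; each statement's English description precedes it below -/
import Mathlib

section
/- The first landscape function is 1-Lipschitz with respect to the bottleneck distance: for barcodes B, B' and all t ∈ ℝ, |λ₁(B)(t) − λ₁(B')(t)| ≤ W_∞(B,B'), where λ₁ is the pointwise maximum of the tent functions f_{(a,b)} over the intervals of the barcode (with λ₁ of the empty barcode equal to 0). -/
/-- The tent function `f_{(a,b)}(t) = (min(t−a, b−t))₊`. -/
def tent (a b t : ℝ) : ℝ := max (min (t - a) (b - t)) 0

/-- The `k`-th persistence landscape function (`k ≥ 1`) of the barcode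
`b = {(a₁,b₁),…,(a_n,b_n)}`: the `k`-th largest value among `{f_{(aᵢ,bᵢ)}(t)}ᵢ`,
taken to be `0` if `k` exceeds the number of intervals. -/
noncomputable def landscape {n : ℕ} (b : Fin n → ℝ × ℝ) (k : ℕ) (t : ℝ) : ℝ :=
  (((Multiset.map (fun i => tent (b i).1 (b i).2 t)
      (Finset.univ.val : Multiset (Fin n))).sort (· ≤ ·)).reverse).getD (k - 1) 0

open scoped ENNReal

/-- Penalty `‖(a−a', b−b')‖_∞` between intervals. -/
def pen (I J : ℝ × ℝ) : ℝ := max |J.1 - I.1| |J.2 - I.2|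

/-- Augmentation of an `n`-bar barcode by countably many copies of each degenerate
interval `[x,x]`, `x ≥ 0`. -/
def Aug (n : ℕ) : Type := Fin n ⊕ (ℕ × {x : ℝ // 0 ≤ x})

/-- The interval attached to an element of the augmented index set. -/
def itv {n : ℕ} (b : Fin n → ℝ × ℝ) : Aug n → ℝ × ℝ
  | .inl i => b i
  | .inr p => (p.2.1, p.2.1)

/-- The cost (supremum of penalties) of a matching `θ`. -/
noncomputable def cost {n m : ℕ} (b : Fin n → ℝ × ℝ) (b' : Fin m → ℝ × ℝ)
    (θ : Aug n ≃ Aug m) : ℝ≥0∞ :=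
  ⨆ I : Aug n, ENNReal.ofReal (pen (itv b I) (itv b' (θ I)))

/-- The bottleneck distance `W_∞`. -/
noncomputable def W {n m : ℕ} (b : Fin n → ℝ × ℝ) (b' : Fin m → ℝ × ℝ) : ℝ≥0∞ :=
  ⨅ θ ∈ {θ : Aug n ≃ Aug m |
    {I : Aug n | pen (itv b I) (itv b' (θ I)) ≠ 0}.Finite}, cost b b' θ

lemma tent_nonneg (a b t : ℝ) : 0 ≤ tent a b t := le_max_right _ _

lemma tent_self (x t : ℝ) : tent x x t = 0 := by
  unfold tent
  rcases le_total t x with h | h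
  · exact max_eq_right (min_le_of_left_le (by linarith))
  · exact max_eq_right (min_le_of_right_le (by linarith))

lemma pen_nonneg (I J : ℝ × ℝ) : 0 ≤ pen I J :=
  le_trans (abs_nonneg _) (le_max_left _ _)

lemma tent_lip (a b a' b' t : ℝ) : tent a b t ≤ tent a' b' t + max |a' - a| |b' - b| := by
  have hc : (0:ℝ) ≤ max |a' - a| |b' - b| := le_trans (abs_nonneg _) (le_max_left _ _)
  have h1 : t - a ≤ (t - a') + max |a' - a| |b' - b| := by
    have := le_abs_self (a' - a)
    have := le_max_left |a' - a| |b' - b|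
    linarith
  have h2 : b - t ≤ (b' - t) + max |a' - a| |b' - b| := by
    have := le_abs_self (b - b')
    have : |b - b'| ≤ max |a' - a| |b' - b| := (abs_sub_comm b b') ▸ le_max_right _ _
    have := le_abs_self (b - b')
    linarith
  unfold tent
  apply max_le
  · calc min (t - a) (b - t)
        ≤ min ((t - a') + max |a' - a| |b' - b|) ((b' - t) + max |a' - a| |b' - b|) :=
          min_le_min h1 h2
      _ = min (t - a') (b' - t) + max |a' - a| |b' - b| := min_add_add_right _ _ _
      _ ≤ max (min (t - a') (b' - t)) 0 + max |a' - a| |b' - b| := by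
          gcongr; exact le_max_left _ _
  · positivity

lemma landscape1_spec {n : ℕ} (b : Fin n → ℝ × ℝ) (t : ℝ) :
    0 ≤ landscape b 1 t ∧ (∀ i, tent (b i).1 (b i).2 t ≤ landscape b 1 t) ∧
    (landscape b 1 t = 0 ∨ ∃ i, landscape b 1 t = tent (b i).1 (b i).2 t) := by
  set M := Multiset.map (fun i => tent (b i).1 (b i).2 t) (Finset.univ.val : Multiset (Fin n))
    with hM
  set l := M.sort (· ≤ ·) with hl
  have hsort : l.Pairwise (· ≤ ·) := Multiset.pairwise_sort _ _
  have hland : landscape b 1 t = l.reverse.getD 0 0 := rfl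
  rcases hr : l.reverse with _ | ⟨a, rest⟩
  · have hlnil : l = [] := by simpa using congrArg List.reverse hr
    have hM0 : M = 0 := by
      have := Multiset.sort_eq (α := ℝ) (r := (· ≤ ·)) (s := M)
      rw [hl] at hlnil; rw [hlnil] at this; simpa using this.symm
    refine ⟨by simp [hland, hr], fun i => ?_, Or.inl (by simp [hland, hr])⟩
    exfalso
    have : tent (b i).1 (b i).2 t ∈ M := by
      rw [hM]; exact Multiset.mem_map_of_mem _ (by simp)
    rw [hM0] at this; simp at this
  · have hgd : landscape b 1 t = a := by simp [hland, hr]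
    have haM : a ∈ M := by
      have : a ∈ l.reverse := by rw [hr]; simp
      rw [List.mem_reverse] at this
      exact (Multiset.mem_sort _).mp this
    obtain ⟨i, _, hi⟩ := Multiset.mem_map.mp haM
    have hmax : ∀ i, tent (b i).1 (b i).2 t ≤ a := by
      intro j
      have hj : tent (b j).1 (b j).2 t ∈ l.reverse := by
        rw [List.mem_reverse]
        exact (Multiset.mem_sort _).mpr (Multiset.mem_map_of_mem _ (by simp))
      have hpw : l.reverse.Pairwise (fun x y => y ≤ x) := by
        rw [List.pairwise_reverse]; exact hsort
      rw [hr] at hj hpw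
      rcases List.mem_cons.mp hj with h | h
      · exact h.le
      · exact (List.pairwise_cons.mp hpw).1 _ h
    refine ⟨hgd ▸ hi ▸ tent_nonneg _ _ _, fun j => hgd ▸ hmax j, Or.inr ⟨i, hgd ▸ hi.symm⟩⟩

lemma tent_itv_le {n : ℕ} (b : Fin n → ℝ × ℝ) (t : ℝ) (I : Aug n) :
    tent (itv b I).1 (itv b I).2 t ≤ landscape b 1 t := by
  obtain ⟨h0, h1, _⟩ := landscape1_spec b t
  cases I with
  | inl i => exact h1 i
  | inr p => simpa [itv, tent_self] using h0

/-- The first landscape function is 1-Lipschitz with respect to the bottleneck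
distance: `|λ₁(B)(t) − λ₁(B')(t)| ≤ W_∞(B,B')`. -/
theorem landscape_one_bottleneck_stable {n m : ℕ}
    (b : Fin n → ℝ × ℝ) (b' : Fin m → ℝ × ℝ)
    (hb : ∀ i, 0 ≤ (b i).1 ∧ (b i).1 ≤ (b i).2)
    (hb' : ∀ i, 0 ≤ (b' i).1 ∧ (b' i).1 ≤ (b' i).2) (t : ℝ) :
    ENNReal.ofReal |landscape b 1 t - landscape b' 1 t| ≤ W b b' := by
  refine le_iInf₂ fun θ _ => ?_
  by_cases htop : cost b b' θ = ⊤
  · rw [htop]; exact le_top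
  set c := (cost b b' θ).toReal with hc
  have hpen : ∀ I : Aug n, pen (itv b I) (itv b' (θ I)) ≤ c := by
    intro I
    have h1 : ENNReal.ofReal (pen (itv b I) (itv b' (θ I))) ≤ cost b b' θ :=
      le_iSup (fun I => ENNReal.ofReal (pen (itv b I) (itv b' (θ I)))) I
    exact (ENNReal.ofReal_le_iff_le_toReal htop).mp h1
  have hc0 : 0 ≤ c := ENNReal.toReal_nonneg
  have key1 : landscape b 1 t ≤ landscape b' 1 t + c := by
    obtain ⟨h0, _, h2⟩ := landscape1_spec b t
    obtain ⟨h0', _, _⟩ := landscape1_spec b' t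
    rcases h2 with h | ⟨i, hi⟩
    · linarith
    · rw [hi]
      calc tent (b i).1 (b i).2 t
          = tent (itv b (.inl i)).1 (itv b (.inl i)).2 t := rfl
        _ ≤ tent (itv b' (θ (.inl i))).1 (itv b' (θ (.inl i))).2 t
              + pen (itv b (.inl i)) (itv b' (θ (.inl i))) := tent_lip _ _ _ _ _
        _ ≤ landscape b' 1 t + c := add_le_add (tent_itv_le b' t _) (hpen _)
  have key2 : landscape b' 1 t ≤ landscape b 1 t + c := by
    obtain ⟨h0', _, h2'⟩ := landscape1_spec b' t
    obtain ⟨h0, _, _⟩ := landscape1_spec b t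
    rcases h2' with h | ⟨j, hj⟩
    · linarith
    · rw [hj]
      set I := θ.symm (.inl j) with hI
      have hθI : θ I = .inl j := θ.apply_symm_apply _
      have hlip : tent (itv b' (θ I)).1 (itv b' (θ I)).2 t
          ≤ tent (itv b I).1 (itv b I).2 t + pen (itv b I) (itv b' (θ I)) := by
        have := tent_lip (itv b' (θ I)).1 (itv b' (θ I)).2 (itv b I).1 (itv b I).2 t
        have e1 : |(itv b I).1 - (itv b' (θ I)).1| = |(itv b' (θ I)).1 - (itv b I).1| :=
          abs_sub_comm _ _
        have e2 : |(itv b I).2 - (itv b' (θ I)).2| = |(itv b' (θ I)).2 - (itv b I).2| :=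
          abs_sub_comm _ _
        unfold pen
        rw [e1, e2] at this
        exact this
      calc tent (b' j).1 (b' j).2 t
          = tent (itv b' (θ I)).1 (itv b' (θ I)).2 t := by rw [hθI]; rfl
        _ ≤ tent (itv b I).1 (itv b I).2 t + pen (itv b I) (itv b' (θ I)) := hlip
        _ ≤ landscape b 1 t + c := add_le_add (tent_itv_le b t _) (hpen _)
  have habs : |landscape b 1 t - landscape b' 1 t| ≤ c := abs_sub_le_iff.mpr ⟨by linarith, by linarith⟩
  calc ENNReal.ofReal |landscape b 1 t - landscape b' 1 t|
      ≤ ENNReal.ofReal c := ENNReal.ofReal_le_ofReal habs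
    _ = cost b b' θ := ENNReal.ofReal_toReal htop
end

section
/- The two-variable power sums x_{i,j}(B) = Σ_s (y_s − x_s)^i (y_s + x_s)^j, for integers i ≥ 1 and j ≥ 0, separate points of barcode space restricted to barcodes with a fixed number n of non-degenerate intervals: if two multisets of n intervals with x_s < y_s have equal values x_{i,j} for all i ≥ 1, j ≥ 0, then the multisets are equal. -/
open Finset

/-- The two-variable power sum `x_{i,j}(B) = Σ_s (y_s − x_s)^i (y_s + x_s)^j` of a
barcode with `n` intervals. -/
def powerSum {n : ℕ} (i j : ℕ) (b : Fin n → ℝ × ℝ) : ℝ :=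
  ∑ s : Fin n, ((b s).2 - (b s).1) ^ i * ((b s).2 + (b s).1) ^ j

private def GoodPS {n : ℕ} (a a' : Fin n → ℝ × ℝ) (f : (ℝ × ℝ) → ℝ) : Prop :=
  ∀ i j : ℕ, 1 ≤ i →
    ∑ s, (a s).1 ^ i * (a s).2 ^ j * f (a s)
      = ∑ s, (a' s).1 ^ i * (a' s).2 ^ j * f (a' s)

/-- Key lemma in transformed coordinates `(u, v) = (y - x, y + x)`: the mixed power
sums `Σ u^i v^j`, `i ≥ 1`, determine a multiset of points with `u > 0`. -/
lemma key_powerSums {n : ℕ} (a a' : Fin n → ℝ × ℝ)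
    (ha : ∀ s, 0 < (a s).1) (ha' : ∀ s, 0 < (a' s).1)
    (h : ∀ i j : ℕ, 1 ≤ i →
      ∑ s, (a s).1 ^ i * (a s).2 ^ j = ∑ s, (a' s).1 ^ i * (a' s).2 ^ j) :
    ∃ e : Equiv.Perm (Fin n), ∀ s, a' (e s) = a s := by
  classical
  have hcong : ∀ f g : (ℝ × ℝ) → ℝ, GoodPS a a' f → (∀ p, f p = g p) → GoodPS a a' g := by
    intro f g hf hfg i j hi
    have := hf i j hi
    simpa [hfg] using this
  have h1 : GoodPS a a' (fun _ => 1) := by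
    intro i j hi
    simpa using h i j hi
  have hadd : ∀ f g : (ℝ × ℝ) → ℝ, GoodPS a a' f → GoodPS a a' g → GoodPS a a' (fun p => f p + g p) := by
    intro f g hf hg i j hi
    simp only [mul_add, Finset.sum_add_distrib]
    rw [hf i j hi, hg i j hi]
  have hconst : ∀ (c : ℝ) (f : (ℝ × ℝ) → ℝ), GoodPS a a' f → GoodPS a a' (fun p => c * f p) := by
    intro c f hf i j hi
    have := hf i j hi
    calc ∑ s, (a s).1 ^ i * (a s).2 ^ j * (c * f (a s))
        = c * ∑ s, (a s).1 ^ i * (a s).2 ^ j * f (a s) := by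
          rw [Finset.mul_sum]; apply Finset.sum_congr rfl; intro s _; ring
      _ = c * ∑ s, (a' s).1 ^ i * (a' s).2 ^ j * f (a' s) := by rw [this]
      _ = ∑ s, (a' s).1 ^ i * (a' s).2 ^ j * (c * f (a' s)) := by
          rw [Finset.mul_sum]; apply Finset.sum_congr rfl; intro s _; ring
  have hfst : ∀ f : (ℝ × ℝ) → ℝ, GoodPS a a' f → GoodPS a a' (fun p => p.1 * f p) := by
    intro f hf i j hi
    have := hf (i + 1) j (by omega)
    calc ∑ s, (a s).1 ^ i * (a s).2 ^ j * ((a s).1 * f (a s))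
        = ∑ s, (a s).1 ^ (i + 1) * (a s).2 ^ j * f (a s) := by
          apply Finset.sum_congr rfl; intro s _; ring
      _ = ∑ s, (a' s).1 ^ (i + 1) * (a' s).2 ^ j * f (a' s) := this
      _ = ∑ s, (a' s).1 ^ i * (a' s).2 ^ j * ((a' s).1 * f (a' s)) := by
          apply Finset.sum_congr rfl; intro s _; ring
  have hsnd : ∀ f : (ℝ × ℝ) → ℝ, GoodPS a a' f → GoodPS a a' (fun p => p.2 * f p) := by
    intro f hf i j hi
    have := hf i (j + 1) hi
    calc ∑ s, (a s).1 ^ i * (a s).2 ^ j * ((a s).2 * f (a s))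
        = ∑ s, (a s).1 ^ i * (a s).2 ^ (j + 1) * f (a s) := by
          apply Finset.sum_congr rfl; intro s _; ring
      _ = ∑ s, (a' s).1 ^ i * (a' s).2 ^ (j + 1) * f (a' s) := this
      _ = ∑ s, (a' s).1 ^ i * (a' s).2 ^ j * ((a' s).2 * f (a' s)) := by
          apply Finset.sum_congr rfl; intro s _; ring
  have hsubfst : ∀ (c : ℝ) (f : (ℝ × ℝ) → ℝ), GoodPS a a' f → GoodPS a a' (fun p => (p.1 - c) * f p) := by
    intro c f hf
    have h' : GoodPS a a' (fun p => p.1 * f p + (-c) * f p) :=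
      hadd (fun p => p.1 * f p) (fun p => (-c) * f p) (hfst f hf) (hconst (-c) f hf)
    exact hcong _ _ h' (fun p => by ring)
  have hsubsnd : ∀ (c : ℝ) (f : (ℝ × ℝ) → ℝ), GoodPS a a' f → GoodPS a a' (fun p => (p.2 - c) * f p) := by
    intro c f hf
    have h' : GoodPS a a' (fun p => p.2 * f p + (-c) * f p) :=
      hadd (fun p => p.2 * f p) (fun p => (-c) * f p) (hsnd f hf) (hconst (-c) f hf)
    exact hcong _ _ h' (fun p => by ring)
  have hL : ∀ (r : ℝ × ℝ) (f : (ℝ × ℝ) → ℝ), GoodPS a a' f →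
      GoodPS a a' (fun p => ((p.1 - r.1) ^ 2 + (p.2 - r.2) ^ 2) * f p) := by
    intro r f hf
    have h' : GoodPS a a' (fun p => (p.1 - r.1) * ((p.1 - r.1) * f p)
        + (p.2 - r.2) * ((p.2 - r.2) * f p)) :=
      hadd (fun p => (p.1 - r.1) * ((p.1 - r.1) * f p))
        (fun p => (p.2 - r.2) * ((p.2 - r.2) * f p))
        (hsubfst r.1 (fun p => (p.1 - r.1) * f p) (hsubfst r.1 f hf))
        (hsubsnd r.2 (fun p => (p.2 - r.2) * f p) (hsubsnd r.2 f hf))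
    exact hcong _ _ h' (fun p => by ring)
  have hprod : ∀ t : Finset (ℝ × ℝ),
      GoodPS a a' (fun p => ∏ r ∈ t, ((p.1 - r.1) ^ 2 + (p.2 - r.2) ^ 2)) := by
    intro t
    induction t using Finset.induction_on with
    | empty => simpa using h1
    | insert _ _ hx ih =>
      rename_i r t'
      have h' := hL r (fun p => ∏ x ∈ t', ((p.1 - x.1) ^ 2 + (p.2 - x.2) ^ 2)) ih
      refine hcong _ _ h' (fun p => ?_)
      rw [Finset.prod_insert hx]
  -- the finite set of all points
  set S : Finset (ℝ × ℝ) := (Finset.image a Finset.univ) ∪ (Finset.image a' Finset.univ)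
    with hSdef
  have hcount : ∀ q : ℝ × ℝ,
      (Finset.univ.filter fun s => a s = q).card
        = (Finset.univ.filter fun s => a' s = q).card := by
    intro q
    by_cases hq : q ∈ S
    · set f : (ℝ × ℝ) → ℝ := fun p => ∏ r ∈ S.erase q, ((p.1 - r.1) ^ 2 + (p.2 - r.2) ^ 2)
        with hfdef
      have hfzero : ∀ p ∈ S, p ≠ q → f p = 0 := by
        intro p hp hpq
        apply Finset.prod_eq_zero (Finset.mem_erase.2 ⟨hpq, hp⟩)
        simp
      have hfpos : 0 < f q := by
        apply Finset.prod_pos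
        intro r hr
        have hrq : r ≠ q := (Finset.mem_erase.1 hr).1
        rcases eq_or_ne q.1 r.1 with h1 | h1
        · have h2 : q.2 - r.2 ≠ 0 := by
            intro h2
            apply hrq
            have h3 : q.2 = r.2 := by
              have := sub_eq_zero.1 h2; linarith
            exact Prod.ext h1.symm h3.symm
          positivity
        · have h1' : q.1 - r.1 ≠ 0 := sub_ne_zero.2 h1
          positivity
      have hqpos : 0 < q.1 := by
        rw [hSdef] at hq
        rcases Finset.mem_union.1 hq with hq | hq <;>
          obtain ⟨s, -, rfl⟩ := Finset.mem_image.1 hq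
        · exact ha s
        · exact ha' s
      have hsum : ∀ (c : Fin n → ℝ × ℝ), (∀ s, c s ∈ S) →
          ∑ s, (c s).1 ^ 1 * (c s).2 ^ 0 * f (c s)
            = ((Finset.univ.filter fun s => c s = q).card : ℝ) * (q.1 * f q) := by
        intro c hc
        rw [← Finset.sum_filter_add_sum_filter_not Finset.univ (fun s => c s = q)]
        have e1 : ∑ s ∈ Finset.univ.filter (fun s => c s = q),
            (c s).1 ^ 1 * (c s).2 ^ 0 * f (c s)
            = ((Finset.univ.filter fun s => c s = q).card : ℝ) * (q.1 * f q) := by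
          rw [Finset.sum_congr rfl (fun s hs => ?_), Finset.sum_const, nsmul_eq_mul]
          have : c s = q := (Finset.mem_filter.1 hs).2
          rw [this]; ring
        have e2 : ∑ s ∈ Finset.univ.filter (fun s => ¬ c s = q),
            (c s).1 ^ 1 * (c s).2 ^ 0 * f (c s) = 0 := by
          apply Finset.sum_eq_zero
          intro s hs
          have : c s ≠ q := (Finset.mem_filter.1 hs).2
          rw [hfzero (c s) (hc s) this]; ring
        rw [e1, e2, add_zero]
      have hca : ∀ s, a s ∈ S := fun s =>
        Finset.mem_union_left _ (Finset.mem_image_of_mem a (Finset.mem_univ s))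
      have hca' : ∀ s, a' s ∈ S := fun s =>
        Finset.mem_union_right _ (Finset.mem_image_of_mem a' (Finset.mem_univ s))
      have heq := hprod (S.erase q) 1 0 le_rfl
      rw [hsum a hca] at *
      have heq2 : ((Finset.univ.filter fun s => a s = q).card : ℝ) * (q.1 * f q)
          = ((Finset.univ.filter fun s => a' s = q).card : ℝ) * (q.1 * f q) := by
        rw [← hsum a' hca']
        exact heq
      have hne : q.1 * f q ≠ 0 := by positivity
      exact_mod_cast mul_right_cancel₀ hne heq2
    · have e1 : (Finset.univ.filter fun s => a s = q) = ∅ := by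
        apply Finset.filter_eq_empty_iff.2
        intro s _ hs
        exact hq (hs ▸ Finset.mem_union_left _
          (Finset.mem_image_of_mem a (Finset.mem_univ s)))
      have e2 : (Finset.univ.filter fun s => a' s = q) = ∅ := by
        apply Finset.filter_eq_empty_iff.2
        intro s _ hs
        exact hq (hs ▸ Finset.mem_union_right _
          (Finset.mem_image_of_mem a' (Finset.mem_univ s)))
      rw [e1, e2]
  -- build the permutation from equal fiber cardinalities
  have F : ∀ q : ℝ × ℝ, {s // a s = q} ≃ {s // a' s = q} := by
    intro q
    apply Fintype.equivOfCardEq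
    rw [Fintype.card_subtype, Fintype.card_subtype]
    exact hcount q
  refine ⟨((Equiv.sigmaFiberEquiv a).symm.trans
    ((Equiv.sigmaCongrRight F).trans (Equiv.sigmaFiberEquiv a'))), ?_⟩
  intro s
  exact (F (a s) ⟨s, rfl⟩).2

/-- The power sums `x_{i,j}` for `i ≥ 1`, `j ≥ 0` separate barcodes with `n`
non-degenerate intervals: if all the power sums agree, the two unordered collections of
intervals coincide (up to a permutation of the index set). -/
theorem powerSums_separate {n : ℕ} (b b' : Fin n → ℝ × ℝ)
    (hb : ∀ s, 0 ≤ (b s).1 ∧ (b s).1 < (b s).2)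
    (hb' : ∀ s, 0 ≤ (b' s).1 ∧ (b' s).1 < (b' s).2)
    (h : ∀ i j : ℕ, 1 ≤ i → powerSum i j b = powerSum i j b') :
    ∃ e : Equiv.Perm (Fin n), ∀ s, b' (e s) = b s := by
  set a : Fin n → ℝ × ℝ := fun s => ((b s).2 - (b s).1, (b s).2 + (b s).1) with hadef
  set a' : Fin n → ℝ × ℝ := fun s => ((b' s).2 - (b' s).1, (b' s).2 + (b' s).1) with ha'def
  obtain ⟨e, he⟩ := key_powerSums a a'
    (fun s => by simpa [hadef, sub_pos] using (hb s).2)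
    (fun s => by simpa [ha'def, sub_pos] using (hb' s).2)
    (fun i j hi => by simpa [powerSum, hadef, ha'def] using h i j hi)
  refine ⟨e, fun s => ?_⟩
  have := he s
  rw [hadef, ha'def] at this
  have h1 : (b' (e s)).2 - (b' (e s)).1 = (b s).2 - (b s).1 := congrArg Prod.fst this
  have h2 : (b' (e s)).2 + (b' (e s)).1 = (b s).2 + (b s).1 := congrArg Prod.snd this
  have hx : (b' (e s)).1 = (b s).1 := by linarith
  have hy : (b' (e s)).2 = (b s).2 := by linarith
  exact Prod.ext hx hy
end
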